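/- Numerical core of Claim 5.2, Case 2 (nef-Fano enlarged-cylinder reduction): Let R > 1 and let χ ∈ M_ℝ satisfy ⟨λ', χ − θ⟩ = R·D/2 and −η_0/2 ≤ ⟨λ_0, χ − θ⟩ < −Q. Let S ⊆ {1, …, n} be nonempty with ⟨λ', β_i⟩ ≥ 0 for all i ∈ S, and set μ := χ − ∑_{i∈S} β_i. Then: (a) |⟨λ_0, μ − θ⟩| ≤ η_0/2; (b) ⟨λ', μ − θ⟩ ≥ (R/2 − 1)·D > −R·D/2; (c) if ⟨λ', β_i⟩ > 0 for some i ∈ S, then ⟨λ', μ − θ⟩ < R·D/2; (d) if ⟨λ', β_i⟩ = 0 for all i ∈ S, then ⟨λ', μ − θ⟩ = R·D/2 and ⟨λ_0, μ − θ⟩ > ⟨λ_0, χ − θ⟩. -/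
import Mathlib


noncomputable section

/-- The standard pairing between `N_ℝ = ℝ²` and `M_ℝ = ℝ²`. -/
def pairR (lam chi : Fin 2 → ℝ) : ℝ := ∑ k, lam k * chi k

/-- `D := −∑_{i : ⟨λ', β_i⟩ ≤ 0} ⟨λ', β_i⟩`. -/
def Dval {n : ℕ} (β : Fin n → Fin 2 → ℝ) (lam' : Fin 2 → ℝ) : ℝ :=
  -∑ i ∈ Finset.univ.filter (fun i => pairR lam' (β i) ≤ 0), pairR lam' (β i)

/-- `Q := η_0/2 + ∑_{i : ⟨λ', β_i⟩ < 0} ⟨λ_0, β_i⟩`, where `η_0 = −∑_i ⟨λ_0, β_i⟩`. -/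
def Qval {n : ℕ} (β : Fin n → Fin 2 → ℝ) (lam0 lam' : Fin 2 → ℝ) : ℝ :=
  (-∑ i, pairR lam0 (β i)) / 2 +
    ∑ i ∈ Finset.univ.filter (fun i => pairR lam' (β i) < 0), pairR lam0 (β i)

lemma pairR_sub (l a b : Fin 2 → ℝ) : pairR l (a - b) = pairR l a - pairR l b := by
  simp [pairR, mul_sub, Finset.sum_sub_distrib]

lemma pairR_sum {n : ℕ} (l : Fin 2 → ℝ) (S : Finset (Fin n)) (β : Fin n → Fin 2 → ℝ) :
    pairR l (∑ i ∈ S, β i) = ∑ i ∈ S, pairR l (β i) := by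
  unfold pairR
  simp only [Finset.sum_apply, Finset.mul_sum]
  exact Finset.sum_comm

/-- numerical core of Claim 5.2, Case 2. -/
theorem claim_5_2_case_2 {n : ℕ} (hn : 1 ≤ n)
    (β : Fin n → Fin 2 → ℝ)
    (hβint : ∀ i, ∃ b : Fin 2 → ℤ, β i = fun k => ((b k : ℝ)))
    (hspan : Submodule.span ℝ (Set.range β) = ⊤)
    (lam0 : Fin 2 → ℝ) (hlam0 : ∀ i, pairR lam0 (β i) < 0)
    (lam' : Fin 2 → ℝ) (hlam'ne : lam' ≠ 0)
    (hlam'ω : pairR lam' (∑ i, β i) = 0)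
    (θ : Fin 2 → ℝ)
    (R : ℝ) (hR : 1 < R)
    (χ : Fin 2 → ℝ)
    (hχ1 : pairR lam' (χ - θ) = R * Dval β lam' / 2)
    (hχ2 : -((-∑ i, pairR lam0 (β i)) / 2) ≤ pairR lam0 (χ - θ))
    (hχ3 : pairR lam0 (χ - θ) < -Qval β lam0 lam')
    (S : Finset (Fin n)) (hS : S.Nonempty)
    (hSnonneg : ∀ i ∈ S, 0 ≤ pairR lam' (β i))
    (μ : Fin 2 → ℝ) (hμ : μ = χ - ∑ i ∈ S, β i) :
    |pairR lam0 (μ - θ)| ≤ (-∑ i, pairR lam0 (β i)) / 2 ∧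
      ((R / 2 - 1) * Dval β lam' ≤ pairR lam' (μ - θ) ∧
        -(R * Dval β lam' / 2) < (R / 2 - 1) * Dval β lam') ∧
      ((∃ i ∈ S, 0 < pairR lam' (β i)) → pairR lam' (μ - θ) < R * Dval β lam' / 2) ∧
      ((∀ i ∈ S, pairR lam' (β i) = 0) →
        pairR lam' (μ - θ) = R * Dval β lam' / 2 ∧
          pairR lam0 (χ - θ) < pairR lam0 (μ - θ)) := by
  classical
  set p0 : Fin n → ℝ := fun i => pairR lam0 (β i) with hp0
  set p' : Fin n → ℝ := fun i => pairR lam' (β i) with hp'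
  -- total sum of p' is zero
  have htot : ∑ i, p' i = 0 := by
    rw [← pairR_sum]; exact hlam'ω
  -- some p' j ≠ 0
  have hexists : ∃ j, p' j ≠ 0 := by
    by_contra h
    push_neg at h
    apply hlam'ne
    set f : (Fin 2 → ℝ) →ₗ[ℝ] ℝ := ∑ k, lam' k • LinearMap.proj k with hf
    have hfv : ∀ v, f v = pairR lam' v := by
      intro v
      simp [hf, pairR, LinearMap.sum_apply]
    have hall : ∀ v : Fin 2 → ℝ, pairR lam' v = 0 := by
      intro v
      have hmem : v ∈ Submodule.span ℝ (Set.range β) := hspan ▸ Submodule.mem_top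
      have hker : Submodule.span ℝ (Set.range β) ≤ LinearMap.ker f := by
        rw [Submodule.span_le]
        rintro _ ⟨i, rfl⟩
        simp only [SetLike.mem_coe, LinearMap.mem_ker, hfv]
        exact h i
      have := hker hmem
      rw [LinearMap.mem_ker] at this
      rw [← hfv]; exact this
    funext k
    have := hall (Pi.single k 1)
    simpa [pairR, Pi.single_apply, mul_ite, Finset.sum_ite_eq'] using this
  -- D > 0
  set A : Finset (Fin n) := Finset.univ.filter (fun i => p' i ≤ 0) with hA
  have hsplit : ∑ i ∈ A, p' i + ∑ i ∈ Finset.univ.filter (fun i => ¬ p' i ≤ 0), p' i = 0 := by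
    rw [Finset.sum_filter_add_sum_filter_not]; exact htot
  have hDdef : Dval β lam' = -∑ i ∈ A, p' i := rfl
  have hDpos : 0 < Dval β lam' := by
    obtain ⟨j, hj⟩ := hexists
    rcases lt_or_gt_of_ne hj with hjneg | hjpos
    · have : ∑ i ∈ A, p' i < ∑ i ∈ A, (0 : ℝ) := by
        apply Finset.sum_lt_sum
        · intro i hi
          exact (Finset.mem_filter.mp hi).2
        · exact ⟨j, Finset.mem_filter.mpr ⟨Finset.mem_univ j, le_of_lt hjneg⟩, hjneg⟩
      rw [hDdef]
      simpa using this
    · have hjmem : j ∈ Finset.univ.filter (fun i => ¬ p' i ≤ 0) :=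
        Finset.mem_filter.mpr ⟨Finset.mem_univ j, not_le.mpr hjpos⟩
      have : ∑ i ∈ Finset.univ.filter (fun i => ¬ p' i ≤ 0), (0 : ℝ)
          < ∑ i ∈ Finset.univ.filter (fun i => ¬ p' i ≤ 0), p' i := by
        apply Finset.sum_lt_sum
        · intro i hi
          exact le_of_lt (not_le.mp (Finset.mem_filter.mp hi).2)
        · exact ⟨j, hjmem, hjpos⟩
      rw [hDdef]
      have h2 : ∑ i ∈ A, p' i = -∑ i ∈ Finset.univ.filter (fun i => ¬ p' i ≤ 0), p' i := by
        linarith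
      rw [h2, neg_neg]
      simpa using this
  -- positive part sums to D
  have hposD : ∑ i ∈ Finset.univ.filter (fun i => ¬ p' i ≤ 0), p' i = Dval β lam' := by
    rw [hDdef]; linarith
  -- pairing identities for μ
  have hsub : μ - θ = (χ - θ) - ∑ i ∈ S, β i := by
    rw [hμ]; abel
  have hμ0 : pairR lam0 (μ - θ) = pairR lam0 (χ - θ) - ∑ i ∈ S, p0 i := by
    rw [hsub, pairR_sub, pairR_sum]
  have hμ' : pairR lam' (μ - θ) = pairR lam' (χ - θ) - ∑ i ∈ S, p' i := by
    rw [hsub, pairR_sub, pairR_sum]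
  -- sum of p0 over S is negative
  have hS0neg : ∑ i ∈ S, p0 i < 0 := by
    have : ∑ i ∈ S, p0 i < ∑ i ∈ S, (0 : ℝ) := by
      apply Finset.sum_lt_sum_of_nonempty hS
      intro i _
      exact hlam0 i
    simpa using this
  -- (a)
  set η0 : ℝ := -∑ i, p0 i with hη0
  have hB : Qval β lam0 lam' = η0 / 2 + ∑ i ∈ Finset.univ.filter (fun i => p' i < 0), p0 i := rfl
  set B : Finset (Fin n) := Finset.univ.filter (fun i => p' i < 0) with hBdef
  have hdisjBS : Disjoint B S := by
    rw [Finset.disjoint_left]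
    intro i hiB hiS
    exact absurd (hSnonneg i hiS) (not_le.mpr (Finset.mem_filter.mp hiB).2)
  have hBS : ∑ i, p0 i ≤ ∑ i ∈ B ∪ S, p0 i := by
    have h1 : ∑ i ∈ B ∪ S, (-p0 i) ≤ ∑ i, (-p0 i) :=
      Finset.sum_le_sum_of_subset_of_nonneg (Finset.subset_univ _)
        (fun i _ _ => by linarith [hlam0 i])
    simp only [Finset.sum_neg_distrib] at h1
    linarith
  have hBSsum : ∑ i ∈ B ∪ S, p0 i = ∑ i ∈ B, p0 i + ∑ i ∈ S, p0 i :=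
    Finset.sum_union hdisjBS
  have ha : |pairR lam0 (μ - θ)| ≤ η0 / 2 := by
    rw [abs_le, hμ0]
    constructor
    · linarith
    · have := hχ3
      rw [hB] at this
      linarith [hBS, hBSsum]
  -- sum of p' over S bounded by D
  have hSD : ∑ i ∈ S, p' i ≤ Dval β lam' := by
    have heq : ∑ i ∈ S.filter (fun i => ¬ p' i ≤ 0), p' i = ∑ i ∈ S, p' i := by
      apply Finset.sum_filter_of_ne
      intro i hi hne
      exact not_le.mpr (lt_of_le_of_ne (hSnonneg i hi) (Ne.symm hne))
    rw [← heq, ← hposD]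
    apply Finset.sum_le_sum_of_subset_of_nonneg
    · intro i hi
      exact Finset.mem_filter.mpr ⟨Finset.mem_univ i, (Finset.mem_filter.mp hi).2⟩
    · intro i hi _
      exact le_of_lt (not_le.mp (Finset.mem_filter.mp hi).2)
  have hSnn : 0 ≤ ∑ i ∈ S, p' i :=
    Finset.sum_nonneg hSnonneg
  refine ⟨ha, ⟨?_, ?_⟩, ?_, ?_⟩
  · rw [hμ', hχ1]; nlinarith [hSD]
  · nlinarith [hDpos]
  · rintro ⟨j, hjS, hjpos⟩
    have : 0 < ∑ i ∈ S, p' i := by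
      have := Finset.sum_lt_sum_of_nonempty hS (f := fun _ => (0:ℝ)) (g := p')
      calc (0:ℝ) < p' j := hjpos
        _ ≤ ∑ i ∈ S, p' i := Finset.single_le_sum hSnonneg hjS
    rw [hμ', hχ1]; linarith
  · intro hzero
    have hz : ∑ i ∈ S, p' i = 0 := Finset.sum_eq_zero hzero
    constructor
    · rw [hμ', hχ1, hz]; ring
    · rw [hμ0]; linarith
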